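/- For every finite-dimensional real inner product space V with orthonormal basis {e_v : v ∈ N}, there exists an orthonormal basis {f_v : v ∈ N} such that the pair is generic: for all subsets S, T ⊆ N of equal size, ⟨f_S, e_T⟩ ≠ 0, where f_S and e_T denote wedge products over the sets in increasing order. -/

import Mathlib

open Finset

variable {N : Type*} [Fintype N] [LinearOrder N]

/-- inv(S,T) = number of pairs (s,t) ∈ S × T with s > t. -/
def invCount (S T : Finset N) : ℕ := ((S ×ˢ T).filter fun p => p.2 < p.1).card

/-- sgn(S,T) = (-1)^inv(S,T). -/
def esign (S T : Finset N) : ℝ := (-1 : ℝ) ^ invCount S T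

/-- The basis vector e_S of the exterior algebra, modelled as `Finset N → ℝ`. -/
def eb (S : Finset N) : Finset N → ℝ := fun T => if T = S then 1 else 0

/-- The bilinear exterior product, defined on basis vectors by
`e_S ∧ e_T = sgn(S,T) e_{S∪T}` if `S ∩ T = ∅`, and `0` otherwise. -/
def wedge (f g : Finset N → ℝ) : Finset N → ℝ :=
  fun U => ∑ S ∈ U.powerset, esign S (U \ S) * f S * g (U \ S)

/-- Inner product on the exterior algebra making `{e_S}` orthonormal. -/
def ip (f g : Finset N → ℝ) : ℝ := ∑ S : Finset N, f S * g S

/-- A vector of V (coordinates `a`) viewed inside the exterior algebra. -/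
def vec (a : N → ℝ) : Finset N → ℝ := fun T => ∑ i : N, if T = {i} then a i else 0

/-- Inner product on V in coordinates. -/
def ipV (a b : N → ℝ) : ℝ := ∑ i : N, a i * b i

/-- Wedge product of a list of elements of the exterior algebra (e_∅ is the unit). -/
def wedgeList (l : List (Finset N → ℝ)) : Finset N → ℝ := l.foldr wedge (eb ∅)

/-- Ordered wedge product f_S = f_{s₁} ∧ ⋯ ∧ f_{s_k} for S = {s₁ < ⋯ < s_k},
for a family of vectors of V given in coordinates. -/
def wedgeFam (f : N → N → ℝ) (S : Finset N) : Finset N → ℝ :=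
  wedgeList ((S.sort (· ≤ ·)).map (fun v => vec (f v)))

/-- A family of vectors of V (in coordinates) is orthonormal. -/
def Orthonormalish (f : N → N → ℝ) : Prop :=
  ∀ u v : N, ipV (f u) (f v) = if u = v then 1 else 0

/-- The bilinear left interior product, defined on basis vectors by
`e_T ⌞ e_S = sgn(S∖T, T)·e_{S∖T}` if `T ⊆ S` and `0` otherwise. -/
def lint (g f : Finset N → ℝ) : Finset N → ℝ :=
  fun U => ∑ T : Finset N, if Disjoint T U then esign U T * g T * f (U ∪ T) else 0

section ExteriorAux
set_option linter.unusedSectionVars false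

variable {N : Type*} [Fintype N] [LinearOrder N]

lemma invCount_singleton_left (i : N) (W : Finset N) :
    invCount {i} W = (W.filter (· < i)).card := by
  unfold invCount
  rw [Finset.singleton_product, Finset.filter_map, Finset.card_map]
  rfl

lemma invCount_singleton_right (i : N) (W : Finset N) :
    invCount W {i} = (W.filter (i < ·)).card := by
  unfold invCount
  rw [Finset.product_singleton, Finset.filter_map, Finset.card_map]
  rfl

lemma esign_mul_self (S T : Finset N) : esign S T * esign S T = 1 := by
  unfold esign
  rw [← pow_add]
  exact Even.neg_one_pow ⟨invCount S T, rfl⟩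

lemma esign_singleton_comm {i : N} {W : Finset N} (h : i ∉ W) :
    esign {i} W * esign W {i} = (-1 : ℝ) ^ W.card := by
  unfold esign
  rw [← pow_add, invCount_singleton_left, invCount_singleton_right]
  congr 1
  have h1 := Finset.card_filter_add_card_filter_not (s := W) (p := (· < i))
  have h2 : W.filter (fun w => ¬ w < i) = W.filter (i < ·) := by
    apply Finset.filter_congr
    intro w hw
    simp only [not_lt, decide_eq_true_eq]
    constructor
    · intro hle
      exact lt_of_le_of_ne hle (fun hiw => h (hiw ▸ hw))
    · exact le_of_lt
  rw [h2] at h1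
  exact h1

lemma esign_swap {i j : N} {W : Finset N} (hi : i ∉ W) (hj : j ∉ W) (hij : i ≠ j) :
    esign (insert j W) {i} * esign {j} (insert i W) = esign W {i} * esign {j} W := by
  unfold esign
  rw [invCount_singleton_right, invCount_singleton_right, invCount_singleton_left,
    invCount_singleton_left, Finset.filter_insert, Finset.filter_insert]
  by_cases h : i < j
  · rw [if_pos h, if_pos h,
      Finset.card_insert_of_notMem (fun hc => hj (Finset.mem_filter.mp hc).1),
      Finset.card_insert_of_notMem (fun hc => hi (Finset.mem_filter.mp hc).1),
      pow_succ, pow_succ]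
    ring
  · rw [if_neg h, if_neg h]

lemma wedge_vec_apply (a : N → ℝ) (g : Finset N → ℝ) (U : Finset N) :
    wedge (vec a) g U = ∑ i ∈ U, esign {i} (U.erase i) * a i * g (U.erase i) := by
  unfold wedge vec
  have step1 : ∀ S ∈ U.powerset,
      esign S (U \ S) * (∑ i : N, if S = {i} then a i else 0) * g (U \ S)
      = ∑ i : N, if S = {i} then esign S (U \ S) * a i * g (U \ S) else 0 := by
    intro S _
    rw [Finset.mul_sum, Finset.sum_mul]
    exact Finset.sum_congr rfl fun i _ => by split <;> simp
  rw [Finset.sum_congr rfl step1, Finset.sum_comm]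
  have step2 : ∀ i : N,
      (∑ S ∈ U.powerset, if S = {i} then esign S (U \ S) * a i * g (U \ S) else 0)
      = if i ∈ U then esign {i} (U.erase i) * a i * g (U.erase i) else 0 := by
    intro i
    rw [Finset.sum_ite_eq' U.powerset ({i} : Finset N)
      (fun S => esign S (U \ S) * a i * g (U \ S))]
    simp only [Finset.mem_powerset, Finset.singleton_subset_iff, Finset.erase_eq]
  rw [Finset.sum_congr rfl (fun i _ => step2 i), Finset.sum_ite_mem, Finset.univ_inter]

lemma lint_vec_apply (a : N → ℝ) (y : Finset N → ℝ) (U : Finset N) :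
    lint (vec a) y U = ∑ i ∈ Uᶜ, esign U {i} * a i * y (insert i U) := by
  unfold lint vec
  have step1 : ∀ T : Finset N,
      (if Disjoint T U then esign U T * (∑ i : N, if T = {i} then a i else 0) * y (U ∪ T) else 0)
      = ∑ i : N, if T = {i} then
          (if Disjoint T U then esign U T * a i * y (U ∪ T) else 0) else 0 := by
    intro T
    split
    · rw [Finset.mul_sum, Finset.sum_mul]
      exact Finset.sum_congr rfl fun i _ => by split <;> simp
    · rw [Finset.sum_eq_zero]
      intro i _
      split <;> rfl
  rw [Finset.sum_congr rfl (fun T _ => step1 T), Finset.sum_comm]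
  have step2 : ∀ i : N,
      (∑ T : Finset N, if T = {i} then
          (if Disjoint T U then esign U T * a i * y (U ∪ T) else 0) else 0)
      = if i ∈ Uᶜ then esign U {i} * a i * y (insert i U) else 0 := by
    intro i
    rw [Finset.sum_ite_eq' Finset.univ ({i} : Finset N)
      (fun T => if Disjoint T U then esign U T * a i * y (U ∪ T) else 0)]
    simp only [Finset.mem_univ, if_true, Finset.disjoint_singleton_left, Finset.mem_compl]
    have : U ∪ {i} = insert i U := by
      rw [Finset.union_comm, ← Finset.insert_eq]
    rw [this]
  rw [Finset.sum_congr rfl (fun i _ => step2 i), Finset.sum_ite_mem, Finset.univ_inter]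

/-- Homogeneous of degree `n`. -/
def IsDeg (n : ℕ) (x : Finset N → ℝ) : Prop := ∀ U : Finset N, U.card ≠ n → x U = 0

lemma isDeg_eb_empty : IsDeg 0 (eb (∅ : Finset N)) := by
  intro U hU
  unfold eb
  rw [if_neg]
  intro h
  exact hU (by simp [h])

lemma isDeg_wedgeList (n : ℕ) (c : Fin n → N → ℝ) :
    IsDeg n (wedgeList (List.ofFn fun i => vec (c i))) := by
  induction n with
  | zero => simpa [wedgeList] using isDeg_eb_empty
  | succ n ih =>
    intro U hU
    rw [List.ofFn_succ]
    show wedge (vec (c 0)) (wedgeList (List.ofFn fun i => vec (c i.succ))) U = 0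
    rw [wedge_vec_apply]
    apply Finset.sum_eq_zero
    intro i hi
    have hpos : 1 ≤ U.card := Finset.card_pos.mpr ⟨i, hi⟩
    rw [ih (fun i => c i.succ) _ (fun h => hU (by rw [Finset.card_erase_of_mem hi] at h; omega))]
    ring

lemma ip_wedge_vec (n : ℕ) (a : N → ℝ) (x y : Finset N → ℝ) (hx : IsDeg n x) :
    ip (wedge (vec a) x) y = (-1 : ℝ)^n * ip x (lint (vec a) y) := by
  unfold ip
  rw [Finset.mul_sum]
  have lhs_eq : ∀ U : Finset N, wedge (vec a) x U * y U
      = ∑ i ∈ U, esign {i} (U.erase i) * a i * x (U.erase i) * y U := by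
    intro U
    rw [wedge_vec_apply, Finset.sum_mul]
  have rhs_eq : ∀ V : Finset N, (-1:ℝ)^n * (x V * lint (vec a) y V)
      = ∑ i ∈ Vᶜ, (-1:ℝ)^n * (x V * (esign V {i} * a i * y (insert i V))) := by
    intro V
    rw [lint_vec_apply, Finset.mul_sum, Finset.mul_sum]
  rw [Finset.sum_congr rfl (fun U _ => lhs_eq U), Finset.sum_congr rfl (fun V _ => rhs_eq V)]
  rw [Finset.sum_sigma', Finset.sum_sigma']
  apply Finset.sum_nbij' (i := fun p => (⟨p.1.erase p.2, p.2⟩ : Σ _ : Finset N, N))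
    (j := fun p => (⟨insert p.2 p.1, p.2⟩ : Σ _ : Finset N, N))
  · intro p hp
    rw [Finset.mem_sigma] at hp ⊢
    exact ⟨Finset.mem_univ _, Finset.mem_compl.mpr (Finset.notMem_erase _ _)⟩
  · intro p hp
    rw [Finset.mem_sigma] at hp ⊢
    exact ⟨Finset.mem_univ _, Finset.mem_insert_self _ _⟩
  · intro p hp
    rw [Finset.mem_sigma] at hp
    have : p.2 ∈ p.1 := hp.2
    exact Sigma.ext (by simpa using Finset.insert_erase this) (by simp)
  · intro p hp
    rw [Finset.mem_sigma] at hp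
    have : p.2 ∉ p.1 := Finset.mem_compl.mp hp.2
    exact Sigma.ext (by simpa using Finset.erase_insert this) (by simp)
  · intro p hp
    rw [Finset.mem_sigma] at hp
    have hmem : p.2 ∈ p.1 := hp.2
    set W := p.1.erase p.2 with hW
    have hiW : p.2 ∉ W := Finset.notMem_erase _ _
    have hins : insert p.2 W = p.1 := Finset.insert_erase hmem
    rw [hins]
    by_cases hx0 : x W = 0
    · rw [hx0]; ring
    · have hc : W.card = n := by
        by_contra hc
        exact hx0 (hx W hc)
      have h1 := esign_singleton_comm (i := p.2) (W := W) hiW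
      rw [hc] at h1
      have h2 := esign_mul_self W ({p.2} : Finset N)
      have h3 : esign {p.2} W = (-1:ℝ)^n * esign W {p.2} := by
        calc esign {p.2} W = esign {p.2} W * (esign W {p.2} * esign W {p.2}) := by
              rw [h2, mul_one]
          _ = (-1:ℝ)^n * esign W {p.2} := by rw [← mul_assoc, h1]
      linear_combination (a p.2 * x W * y p.1) * h3

lemma esign_empty_left (S : Finset N) : esign (∅ : Finset N) S = 1 := by
  simp [esign, invCount]

lemma esign_empty_right (S : Finset N) : esign S (∅ : Finset N) = 1 := by
  simp [esign, invCount]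

lemma lint_wedge_vec (n : ℕ) (a b : N → ℝ) (y : Finset N → ℝ) (hy : IsDeg n y) (U : Finset N) :
    lint (vec a) (wedge (vec b) y) U
      = (-1 : ℝ)^n * ipV a b * y U + wedge (vec b) (lint (vec a) y) U := by
  rw [lint_vec_apply]
  have lhs_eq : ∀ i ∈ Uᶜ, esign U {i} * a i * wedge (vec b) y (insert i U)
      = esign U {i} * a i * (esign {i} U * b i * y U)
        + ∑ j ∈ U, esign U {i} * a i
            * (esign {j} (insert i (U.erase j)) * b j * y (insert i (U.erase j))) := by
    intro i hi
    have hiU : i ∉ U := Finset.mem_compl.mp hi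
    rw [wedge_vec_apply, Finset.sum_insert hiU, Finset.erase_insert hiU, mul_add,
      Finset.mul_sum]
    congr 1
    refine Finset.sum_congr rfl fun j hj => ?_
    rw [Finset.erase_insert_of_ne (fun h => hiU (by rw [h]; exact hj))]
  rw [Finset.sum_congr rfl lhs_eq, Finset.sum_add_distrib]
  have rhs2 : wedge (vec b) (lint (vec a) y) U
      = (∑ j ∈ U, esign {j} (U.erase j) * b j * (esign (U.erase j) {j} * a j * y U))
        + ∑ j ∈ U, ∑ i ∈ Uᶜ, esign {j} (U.erase j) * b j
            * (esign (U.erase j) {i} * a i * y (insert i (U.erase j))) := by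
    rw [wedge_vec_apply, ← Finset.sum_add_distrib]
    refine Finset.sum_congr rfl fun j hj => ?_
    rw [lint_vec_apply, Finset.compl_erase,
      Finset.sum_insert (by simp [Finset.mem_compl, hj] : j ∉ Uᶜ),
      Finset.insert_erase hj, mul_add, Finset.mul_sum]
  rw [rhs2]
  have hdouble : (∑ i ∈ Uᶜ, ∑ j ∈ U, esign U {i} * a i
        * (esign {j} (insert i (U.erase j)) * b j * y (insert i (U.erase j))))
      = ∑ j ∈ U, ∑ i ∈ Uᶜ, esign {j} (U.erase j) * b j
          * (esign (U.erase j) {i} * a i * y (insert i (U.erase j))) := by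
    rw [Finset.sum_comm]
    refine Finset.sum_congr rfl fun j hj => Finset.sum_congr rfl fun i hi => ?_
    have hiU : i ∉ U := Finset.mem_compl.mp hi
    have hij : i ≠ j := fun h => hiU (h ▸ hj)
    have hiW : i ∉ U.erase j := fun h => hiU (Finset.mem_of_mem_erase h)
    have hjW : j ∉ U.erase j := Finset.notMem_erase _ _
    have key := esign_swap (i := i) (j := j) (W := U.erase j) hiW hjW hij
    rw [Finset.insert_erase hj] at key
    linear_combination (a i * b j * y (insert i (U.erase j))) * key
  rw [hdouble]
  have hdiag : ∑ i ∈ Uᶜ, esign U {i} * a i * (esign {i} U * b i * y U)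
      = (-1:ℝ)^n * ipV a b * y U
        + ∑ j ∈ U, esign {j} (U.erase j) * b j * (esign (U.erase j) {j} * a j * y U) := by
    by_cases hyU : y U = 0
    · rw [hyU]
      simp
    · have hcard : U.card = n := by
        by_contra hc; exact hyU (hy U hc)
      rcases Finset.eq_empty_or_nonempty U with hUe | hUne
      · subst hUe
        have hn0 : n = 0 := by simpa using hcard.symm
        subst hn0
        have hterm : ∀ i ∈ (∅ : Finset N)ᶜ,
            esign ∅ {i} * a i * (esign {i} ∅ * b i * y ∅) = (a i * b i) * y ∅ := by
          intro i _
          rw [esign_empty_left, esign_empty_right]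
          ring
        rw [Finset.sum_congr rfl hterm, ← Finset.sum_mul, Finset.compl_empty]
        have hipV : ipV a b = ∑ i : N, a i * b i := rfl
        simp [hipV]
      have hpos : 0 < U.card := Finset.card_pos.mpr hUne
      have hn1 : n - 1 + 1 = n := by omega
      have h2 : (-1:ℝ)^(n-1) * (-1) = (-1:ℝ)^n := by rw [← pow_succ, hn1]
      have e1 : ∀ i ∈ Uᶜ, esign U {i} * a i * (esign {i} U * b i * y U)
          = (-1:ℝ)^n * y U * (a i * b i) := by
        intro i hi
        have h1 := esign_singleton_comm (i := i) (W := U) (Finset.mem_compl.mp hi)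
        rw [hcard] at h1
        linear_combination (a i * b i * y U) * h1
      have e2 : ∀ j ∈ U, esign {j} (U.erase j) * b j * (esign (U.erase j) {j} * a j * y U)
          = -((-1:ℝ)^n * y U) * (a j * b j) := by
        intro j hj
        have hjW : j ∉ U.erase j := Finset.notMem_erase _ _
        have h1 := esign_singleton_comm (i := j) (W := U.erase j) hjW
        rw [Finset.card_erase_of_mem hj, hcard] at h1
        linear_combination (a j * b j * y U) * h1 - (a j * b j * y U) * h2
      rw [Finset.sum_congr rfl e1, Finset.sum_congr rfl e2, ← Finset.mul_sum, ← Finset.mul_sum]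
      have hsplit := Finset.sum_add_sum_compl U (fun i => a i * b i)
      have hipV : ipV a b = ∑ i : N, a i * b i := rfl
      rw [hipV]
      linear_combination ((-1:ℝ)^n * y U) * hsplit
  rw [hdiag]
  ring

lemma lint_vec_eb_empty (a : N → ℝ) (U : Finset N) : lint (vec a) (eb (∅ : Finset N)) U = 0 := by
  rw [lint_vec_apply]
  apply Finset.sum_eq_zero
  intro i _
  have : eb (∅ : Finset N) (insert i U) = 0 := by
    unfold eb
    rw [if_neg (by simp)]
  rw [this]
  ring

lemma wedge_vec_zero (b : N → ℝ) (g : Finset N → ℝ) (hg : ∀ U, g U = 0) (U : Finset N) :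
    wedge (vec b) g U = 0 := by
  rw [wedge_vec_apply]
  apply Finset.sum_eq_zero
  intro i _
  rw [hg]
  ring

lemma lint_wedgeList (a : N → ℝ) : ∀ (n : ℕ) (bs : Fin (n+1) → N → ℝ) (U : Finset N),
    lint (vec a) (wedgeList (List.ofFn fun i => vec (bs i))) U
      = ∑ j : Fin (n+1), (-1:ℝ)^(n - (j:ℕ)) * ipV a (bs j)
          * wedgeList (List.ofFn fun i => vec (bs (j.succAbove i))) U
  | 0, bs, U => by
    rw [List.ofFn_succ]
    show lint (vec a) (wedge (vec (bs 0)) (wedgeList (List.ofFn fun i => vec (bs i.succ)))) U = _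
    have h0 : (List.ofFn fun i : Fin 0 => vec (bs i.succ)) = [] := List.ofFn_zero
    rw [h0]
    rw [show wedgeList ([] : List (Finset N → ℝ)) = eb (∅ : Finset N) from rfl]
    rw [lint_wedge_vec 0 a (bs 0) _ isDeg_eb_empty U]
    have hz : wedge (vec (bs 0)) (lint (vec a) (eb (∅ : Finset N))) U = 0 :=
      wedge_vec_zero _ _ (lint_vec_eb_empty a) U
    rw [hz, Fin.sum_univ_one]
    have h1 : (List.ofFn fun i : Fin 0 => vec (bs ((0 : Fin 1).succAbove i))) = [] :=
      List.ofFn_zero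
    rw [h1]
    rw [show wedgeList ([] : List (Finset N → ℝ)) = eb (∅ : Finset N) from rfl]
    norm_num
  | (n+1), bs, U => by
    rw [List.ofFn_succ]
    show lint (vec a) (wedge (vec (bs 0))
      (wedgeList (List.ofFn fun i => vec (bs i.succ)))) U = _
    rw [lint_wedge_vec (n+1) a (bs 0) _ (isDeg_wedgeList (n+1) (fun i => bs i.succ)) U]
    have hswap : wedge (vec (bs 0))
        (lint (vec a) (wedgeList (List.ofFn fun i => vec (bs i.succ)))) U
        = ∑ j : Fin (n+1), (-1:ℝ)^(n - (j:ℕ)) * ipV a (bs j.succ)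
            * wedge (vec (bs 0))
              (wedgeList (List.ofFn fun i => vec (bs (j.succAbove i).succ))) U := by
      rw [wedge_vec_apply]
      have hterm : ∀ m ∈ U, esign {m} (U.erase m) * (bs 0) m
            * lint (vec a) (wedgeList (List.ofFn fun i => vec (bs i.succ))) (U.erase m)
          = ∑ j : Fin (n+1), (-1:ℝ)^(n - (j:ℕ)) * ipV a (bs j.succ)
              * (esign {m} (U.erase m) * (bs 0) m
                * wedgeList (List.ofFn fun i => vec (bs (j.succAbove i).succ)) (U.erase m)) := by
        intro m _
        rw [lint_wedgeList a n (fun i => bs i.succ) (U.erase m), Finset.mul_sum]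
        exact Finset.sum_congr rfl fun j _ => by ring
      rw [Finset.sum_congr rfl hterm, Finset.sum_comm]
      refine Finset.sum_congr rfl fun j _ => ?_
      rw [wedge_vec_apply, Finset.mul_sum]
    rw [hswap]
    conv_rhs => rw [Fin.sum_univ_succ]
    congr 1
    refine Finset.sum_congr rfl fun j _ => ?_
    have hlist : (List.ofFn fun i : Fin (n+1) => vec (bs (j.succ.succAbove i)))
        = vec (bs 0) :: List.ofFn fun i : Fin n => vec (bs (j.succAbove i).succ) := by
      rw [List.ofFn_succ]
      congr 1
      congr 1
      funext i
      rw [Fin.succ_succAbove_succ]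
    have hsub : ((n+1) - ((j.succ : Fin (n+2)) : ℕ)) = n - (j : ℕ) := by
      rw [Fin.val_succ]
      omega
    rw [hlist, hsub]
    rfl

lemma gram_det : ∀ (n : ℕ) (as bs : Fin n → N → ℝ),
    ip (wedgeList (List.ofFn fun i => vec (as i))) (wedgeList (List.ofFn fun i => vec (bs i)))
      = Matrix.det (Matrix.of fun i j => ipV (as i) (bs j))
  | 0, as, bs => by
    have h0 : (List.ofFn fun i : Fin 0 => vec (as i)) = [] := List.ofFn_zero
    have h0' : (List.ofFn fun i : Fin 0 => vec (bs i)) = [] := List.ofFn_zero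
    rw [h0, h0']
    show ip (eb ∅) (eb ∅) = _
    rw [Matrix.det_isEmpty]
    unfold ip eb
    rw [Finset.sum_eq_single (∅ : Finset N)]
    · simp
    · intro S _ hS
      rw [if_neg hS]
      ring
    · intro h
      exact absurd (Finset.mem_univ _) h
  | (n+1), as, bs => by
    rw [List.ofFn_succ (f := fun i => vec (as i))]
    show ip (wedge (vec (as 0)) (wedgeList (List.ofFn fun i => vec (as i.succ)))) _ = _
    rw [ip_wedge_vec n (as 0) _ _ (isDeg_wedgeList n (fun i => as i.succ))]
    have hexp : ip (wedgeList (List.ofFn fun i => vec (as i.succ)))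
        (lint (vec (as 0)) (wedgeList (List.ofFn fun i => vec (bs i))))
        = ∑ j : Fin (n+1), (-1:ℝ)^(n - (j:ℕ)) * ipV (as 0) (bs j)
            * ip (wedgeList (List.ofFn fun i => vec (as i.succ)))
                (wedgeList (List.ofFn fun i => vec (bs (j.succAbove i)))) := by
      unfold ip
      have hterm : ∀ V : Finset N, wedgeList (List.ofFn fun i => vec (as i.succ)) V
            * lint (vec (as 0)) (wedgeList (List.ofFn fun i => vec (bs i))) V
          = ∑ j : Fin (n+1), (-1:ℝ)^(n - (j:ℕ)) * ipV (as 0) (bs j)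
              * (wedgeList (List.ofFn fun i => vec (as i.succ)) V
                * wedgeList (List.ofFn fun i => vec (bs (j.succAbove i))) V) := by
        intro V
        rw [lint_wedgeList (as 0) n bs V, Finset.mul_sum]
        exact Finset.sum_congr rfl fun j _ => by ring
      rw [Finset.sum_congr rfl (fun V _ => hterm V), Finset.sum_comm]
      exact Finset.sum_congr rfl fun j _ => by rw [Finset.mul_sum]
    rw [hexp, Matrix.det_succ_row_zero, Finset.mul_sum]
    refine Finset.sum_congr rfl fun j _ => ?_
    rw [gram_det n (fun i => as i.succ) (fun i => bs (j.succAbove i))]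
    have hsign : (-1:ℝ)^n * (-1:ℝ)^(n - (j:ℕ)) = (-1:ℝ)^((j:ℕ)) := by
      have hj : (j : ℕ) ≤ n := Nat.lt_succ_iff.mp j.isLt
      have h1 : (-1:ℝ)^n = (-1:ℝ)^(n - (j:ℕ)) * (-1:ℝ)^((j:ℕ)) := by
        rw [← pow_add, Nat.sub_add_cancel hj]
      have h2 : (-1:ℝ)^(n - (j:ℕ)) * (-1:ℝ)^(n - (j:ℕ)) = 1 := by
        rw [← pow_add]
        exact Even.neg_one_pow ⟨n - (j:ℕ), rfl⟩
      calc (-1:ℝ)^n * (-1:ℝ)^(n - (j:ℕ))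
          = ((-1:ℝ)^(n - (j:ℕ)) * (-1:ℝ)^(n - (j:ℕ))) * (-1:ℝ)^((j:ℕ)) := by
            rw [h1]; ring
        _ = (-1:ℝ)^((j:ℕ)) := by rw [h2, one_mul]
    have hM : ∀ (i i' : Fin n),
        (Matrix.of fun i j => ipV (as i) (bs j)).submatrix Fin.succ j.succAbove i i'
          = ipV (as i.succ) (bs (j.succAbove i')) := fun i i' => rfl
    have hMdet : ((Matrix.of fun i j => ipV (as i) (bs j)).submatrix Fin.succ j.succAbove).det
        = (Matrix.of fun (i i' : Fin n) => ipV (as i.succ) (bs (j.succAbove i'))).det := rfl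
    rw [hMdet]
    have hentry : (Matrix.of fun i j' => ipV (as i) (bs j')) 0 j = ipV (as 0) (bs j) := rfl
    rw [hentry]
    linear_combination (ipV (as 0) (bs j)
      * (Matrix.of fun (i i' : Fin n) => ipV (as i.succ) (bs (j.succAbove i'))).det) * hsign
end ExteriorAux

section PolyAux
set_option linter.unusedSectionVars false

open Matrix MvPolynomial

/-- Index type for the variables: pairs i < j. -/
abbrev PIdx (N : Type*) [LinearOrder N] := {p : N × N // p.1 < p.2}

variable (N : Type*) [Fintype N] [LinearOrder N]

/-- Generic skew-symmetric matrix of variables. -/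
noncomputable def Amat : Matrix N N (MvPolynomial (PIdx N) ℝ) := Matrix.of fun i j =>
  if h : i < j then X ⟨(i,j), h⟩ else if h' : j < i then -X ⟨(j,i), h'⟩ else 0

/-- The (scaled) Cayley transform of `Amat`. -/
noncomputable def Pmat : Matrix N N (MvPolynomial (PIdx N) ℝ) :=
  (1 - Amat N) * (1 + Amat N).adjugate

variable {N}

/-- Real skew-symmetric matrix with entries `x`. -/
def Arm (x : PIdx N → ℝ) : Matrix N N ℝ := Matrix.of fun i j =>
  if h : i < j then x ⟨(i,j), h⟩ else if h' : j < i then -x ⟨(j,i), h'⟩ else 0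

lemma Amat_map (x : PIdx N → ℝ) : (Amat N).map (eval x) = Arm x := by
  ext i j
  simp only [Amat, Arm, Matrix.map_apply, Matrix.of_apply]
  split_ifs <;> simp

lemma Amat_transpose : (Amat N)ᵀ = -(Amat N) := by
  ext i j
  simp only [Matrix.transpose_apply, Matrix.neg_apply, Amat, Matrix.of_apply]
  rcases lt_trichotomy i j with h | h | h
  · simp [dif_neg (asymm h), dif_pos h]
  · subst h
    simp [lt_irrefl]
  · simp [dif_pos h, dif_neg (asymm h)]

lemma Arm_transpose (x : PIdx N → ℝ) : (Arm x)ᵀ = -(Arm x) := by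
  ext i j
  simp only [Matrix.transpose_apply, Matrix.neg_apply, Arm, Matrix.of_apply]
  rcases lt_trichotomy i j with h | h | h
  · simp [dif_neg (asymm h), dif_pos h]
  · subst h
    simp [lt_irrefl]
  · simp [dif_pos h, dif_neg (asymm h)]

lemma Arm_zero : Arm (fun _ : PIdx N => (0:ℝ)) = 0 := by
  ext i j
  simp only [Arm, Matrix.of_apply, Matrix.zero_apply]
  split_ifs <;> simp

lemma det_one_add_Amat_ne_zero : Matrix.det (1 + Amat N) ≠ 0 := by
  intro h
  have h2 := congrArg (MvPolynomial.eval (fun _ : PIdx N => (0:ℝ))) h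
  rw [RingHom.map_det, map_zero] at h2
  rw [show (MvPolynomial.eval (fun _ : PIdx N => (0:ℝ))).mapMatrix (1 + Amat N)
      = 1 + (Amat N).map (MvPolynomial.eval (fun _ : PIdx N => (0:ℝ))) by
    rw [map_add, _root_.map_one]; rfl] at h2
  rw [Amat_map, Arm_zero, add_zero, Matrix.det_one] at h2
  exact one_ne_zero h2

lemma det_one_sub_Amat_ne_zero : Matrix.det (1 - Amat N) ≠ 0 := by
  intro h
  have h2 := congrArg (MvPolynomial.eval (fun _ : PIdx N => (0:ℝ))) h
  rw [RingHom.map_det, map_zero] at h2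
  rw [show (MvPolynomial.eval (fun _ : PIdx N => (0:ℝ))).mapMatrix (1 - Amat N)
      = 1 - (Amat N).map (MvPolynomial.eval (fun _ : PIdx N => (0:ℝ))) by
    rw [map_sub, _root_.map_one]; rfl] at h2
  rw [Amat_map, Arm_zero, sub_zero, Matrix.det_one] at h2
  exact one_ne_zero h2

lemma cayley_aux {K : Type*} [Field K] {n : Type*} [Fintype n] [DecidableEq n]
    (A : Matrix n n K) (h1 : Matrix.det (1 - A) ≠ 0) (h2 : Matrix.det (1 + A) ≠ 0) :
    (1 - A) * ((1 - A) * (1 + A)).adjugate * (1 + A)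
      = Matrix.det ((1 - A) * (1 + A)) • 1 := by
  have hcomm : (1 - A) * (1 + A) = (1 + A) * (1 - A) := by noncomm_ring
  have hdetB : Matrix.det ((1 - A) * (1 + A)) ≠ 0 := by
    rw [Matrix.det_mul]
    exact mul_ne_zero h1 h2
  have hBunit : IsUnit (Matrix.det ((1 - A) * (1 + A))) := isUnit_iff_ne_zero.mpr hdetB
  have hadj : ((1 - A) * (1 + A)).adjugate
      = Matrix.det ((1 - A) * (1 + A)) • ((1 - A) * (1 + A))⁻¹ := by
    have hmul := Matrix.mul_adjugate ((1 - A) * (1 + A))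
    have := congrArg (fun M => ((1 - A) * (1 + A))⁻¹ * M) hmul
    rw [← Matrix.mul_assoc, Matrix.nonsing_inv_mul _ hBunit, Matrix.one_mul,
      Matrix.mul_smul, Matrix.mul_one] at this
    exact this
  rw [hadj]
  rw [Matrix.mul_smul, Matrix.smul_mul]
  congr 1
  rw [hcomm, Matrix.mul_inv_rev]
  rw [show ((1:Matrix n n K) - A) * ((1 - A)⁻¹ * (1 + A)⁻¹) * (1 + A)
      = (((1:Matrix n n K) - A) * (1 - A)⁻¹) * ((1 + A)⁻¹ * (1 + A)) from by
    simp only [Matrix.mul_assoc]]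
  rw [Matrix.mul_nonsing_inv _ (isUnit_iff_ne_zero.mpr h1),
    Matrix.nonsing_inv_mul _ (isUnit_iff_ne_zero.mpr h2), Matrix.one_mul]

end PolyAux

section PolyAux2
set_option linter.unusedSectionVars false

open Matrix MvPolynomial

variable {N : Type*} [Fintype N] [LinearOrder N]

lemma mapMatrix_smul_one {R S : Type*} [CommRing R] [CommRing S] (f : R →+* S) (c : R) :
    f.mapMatrix ((c • 1 : Matrix N N R)) = f c • (1 : Matrix N N S) := by
  ext i j
  simp only [RingHom.mapMatrix_apply, Matrix.map_apply, Matrix.smul_apply, Matrix.one_apply,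
    smul_eq_mul, mul_ite, mul_one, mul_zero, apply_ite f, _root_.map_one, _root_.map_zero]

lemma Pmat_transpose : (Pmat N)ᵀ = (1 - Amat N).adjugate * (1 + Amat N) := by
  unfold Pmat
  rw [Matrix.transpose_mul, Matrix.adjugate_transpose]
  rw [show ((1:Matrix N N (MvPolynomial (PIdx N) ℝ)) + Amat N)ᵀ = 1 - Amat N from by
    rw [Matrix.transpose_add, Matrix.transpose_one, Amat_transpose, ← sub_eq_add_neg]]
  rw [show ((1:Matrix N N (MvPolynomial (PIdx N) ℝ)) - Amat N)ᵀ = 1 + Amat N from by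
    rw [Matrix.transpose_sub, Matrix.transpose_one, Amat_transpose, sub_neg_eq_add]]

lemma Pmat_mul_transpose :
    Pmat N * (Pmat N)ᵀ
      = (Matrix.det (1 - Amat N) * Matrix.det (1 + Amat N)) • 1 := by
  classical
  set K := FractionRing (MvPolynomial (PIdx N) ℝ) with hK
  let φ : MvPolynomial (PIdx N) ℝ →+* K := algebraMap _ K
  have hinj : Function.Injective φ := IsFractionRing.injective _ _
  apply Matrix.map_injective hinj
  show (Pmat N * (Pmat N)ᵀ).map φ = _
  have hmm : ∀ M : Matrix N N (MvPolynomial (PIdx N) ℝ), M.map φ = φ.mapMatrix M :=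
    fun _ => rfl
  set A' : Matrix N N K := (Amat N).map φ with hA'
  have hsub : φ.mapMatrix (1 - Amat N) = 1 - A' := by
    rw [_root_.map_sub, _root_.map_one]; rfl
  have hadd : φ.mapMatrix (1 + Amat N) = 1 + A' := by
    rw [_root_.map_add, _root_.map_one]; rfl
  have h1 : Matrix.det ((1:Matrix N N K) - A') ≠ 0 := by
    intro h
    apply det_one_sub_Amat_ne_zero (N := N)
    apply hinj
    rw [RingHom.map_det, hsub, h, map_zero]
  have h2 : Matrix.det ((1:Matrix N N K) + A') ≠ 0 := by
    intro h
    apply det_one_add_Amat_ne_zero (N := N)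
    apply hinj
    rw [RingHom.map_det, hadd, h, map_zero]
  rw [hmm, _root_.map_mul]
  have hP : φ.mapMatrix (Pmat N) = (1 - A') * (1 + A').adjugate := by
    unfold Pmat
    rw [_root_.map_mul, hsub, RingHom.map_adjugate, hadd]
  have hPT : φ.mapMatrix ((Pmat N)ᵀ) = (1 - A').adjugate * (1 + A') := by
    rw [Pmat_transpose, _root_.map_mul, hadd, RingHom.map_adjugate, hsub]
  rw [hP, hPT]
  have hprod : ((1 - A') * (1 + A').adjugate) * ((1 - A').adjugate * (1 + A'))
      = (1 - A') * ((1 - A') * (1 + A')).adjugate * (1 + A') := by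
    rw [Matrix.adjugate_mul_distrib]
    simp only [Matrix.mul_assoc]
  rw [hprod, cayley_aux A' h1 h2, Matrix.det_mul]
  simp only [hmm]
  rw [mapMatrix_smul_one, _root_.map_mul, RingHom.map_det, RingHom.map_det, hsub, hadd]

/-- Real version of `Pmat`. -/
noncomputable def Prm (x : PIdx N → ℝ) : Matrix N N ℝ := (1 - Arm x) * (1 + Arm x).adjugate

lemma Pmat_map (x : PIdx N → ℝ) : (Pmat N).map (eval x) = Prm x := by
  show (eval x).mapMatrix (Pmat N) = _
  unfold Pmat Prm
  rw [_root_.map_mul, RingHom.map_adjugate, _root_.map_sub, _root_.map_add, _root_.map_one]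
  rw [show (eval x).mapMatrix (Amat N) = Arm x from Amat_map x]

lemma det_one_sub_Arm (x : PIdx N → ℝ) :
    Matrix.det (1 - Arm x) = Matrix.det (1 + Arm x) := by
  rw [← Matrix.det_transpose (1 - Arm x), Matrix.transpose_sub, Matrix.transpose_one,
    Arm_transpose, sub_neg_eq_add]

lemma Prm_mul_transpose (x : PIdx N → ℝ) :
    Prm x * (Prm x)ᵀ = (Matrix.det (1 + Arm x) * Matrix.det (1 + Arm x)) • 1 := by
  have key := congrArg ((eval x).mapMatrix) (Pmat_mul_transpose (N := N))
  rw [_root_.map_mul] at key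
  have hPT : (eval x).mapMatrix ((Pmat N)ᵀ) = (Prm x)ᵀ := by
    show ((Pmat N)ᵀ).map (eval x) = _
    rw [Matrix.transpose_map, Pmat_map]
  have hP : (eval x).mapMatrix (Pmat N) = Prm x := Pmat_map x
  rw [hP, hPT, mapMatrix_smul_one, _root_.map_mul, RingHom.map_det, RingHom.map_det] at key
  rw [show (eval x).mapMatrix (1 - Amat N) = 1 - Arm x from by
    rw [_root_.map_sub, _root_.map_one]; exact congrArg _ (Amat_map x)] at key
  rw [show (eval x).mapMatrix (1 + Amat N) = 1 + Arm x from by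
    rw [_root_.map_add, _root_.map_one]; exact congrArg _ (Amat_map x)] at key
  rw [key, det_one_sub_Arm]

end PolyAux2

section SpecialAux
set_option linter.unusedSectionVars false

open Matrix MvPolynomial

variable {N : Type*} [Fintype N] [LinearOrder N]

/-- The `i`-th element of `S` in increasing order. -/
def sortIdx (S : Finset N) : Fin S.card → N :=
  fun i => (S.sort (· ≤ ·)).get (Fin.cast (Finset.length_sort (· ≤ ·)).symm i)

lemma sortIdx_injective (S : Finset N) : Function.Injective (sortIdx S) := by
  intro i j hij
  have hnd := Finset.sort_nodup S (· ≤ ·)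
  have h2 := List.nodup_iff_injective_get.mp hnd hij
  have h3 := congrArg Fin.val h2
  exact Fin.ext h3

lemma sortIdx_mem (S : Finset N) (i : Fin S.card) : sortIdx S i ∈ S :=
  (Finset.mem_sort (· ≤ ·)).mp (List.get_mem _ _)

lemma sortIdx_surj (S : Finset N) {t : N} (ht : t ∈ S) : ∃ i, sortIdx S i = t := by
  have h1 : t ∈ S.sort (· ≤ ·) := (Finset.mem_sort (· ≤ ·)).mpr ht
  obtain ⟨n, hn⟩ := List.mem_iff_get.mp h1
  exact ⟨Fin.cast (Finset.length_sort (· ≤ ·)) n, by simpa [sortIdx] using hn⟩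

lemma submatrix_orth_det_ne_zero (S T : Finset N) (h : S.card = T.card)
    (Q : Matrix N N ℝ) (hQ : Q * Qᵀ = 1)
    (hsupp : ∀ s ∈ S, ∀ t, t ∉ T → Q s t = 0) :
    Matrix.det (Q.submatrix (sortIdx S) (sortIdx T ∘ Fin.cast h)) ≠ 0 := by
  set v : Fin S.card → N := sortIdx T ∘ Fin.cast h with hv
  have hvinj : Function.Injective v :=
    (sortIdx_injective T).comp (fun a b hab => by
      have := congrArg Fin.val hab
      exact Fin.ext this)
  have himg : Finset.image v Finset.univ = T := by
    apply Finset.Subset.antisymm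
    · intro t htm
      obtain ⟨j, _, hj⟩ := Finset.mem_image.mp htm
      exact hj ▸ sortIdx_mem T _
    · intro t ht
      obtain ⟨i, hi⟩ := sortIdx_surj T ht
      exact Finset.mem_image.mpr ⟨Fin.cast h.symm i, Finset.mem_univ _, by
        rw [hv]
        show sortIdx T (Fin.cast h (Fin.cast h.symm i)) = t
        rw [show Fin.cast h (Fin.cast h.symm i) = i from Fin.ext rfl, hi]⟩
  set M := Q.submatrix (sortIdx S) v with hM
  have key : M * Mᵀ = 1 := by
    ext i i'
    rw [Matrix.mul_apply]
    simp only [hM, Matrix.transpose_apply, Matrix.submatrix_apply]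
    have hre : (∑ j : Fin S.card, Q (sortIdx S i) (v j) * Q (sortIdx S i') (v j))
        = ∑ t ∈ T, Q (sortIdx S i) t * Q (sortIdx S i') t := by
      have h1 : (∑ t ∈ Finset.image v Finset.univ, Q (sortIdx S i) t * Q (sortIdx S i') t)
          = ∑ j : Fin S.card, Q (sortIdx S i) (v j) * Q (sortIdx S i') (v j) :=
        Finset.sum_image (fun a _ b _ hab => hvinj hab)
      rw [himg] at h1
      exact h1.symm
    rw [hre]
    have hext : (∑ t ∈ T, Q (sortIdx S i) t * Q (sortIdx S i') t)
        = ∑ t : N, Q (sortIdx S i) t * Q (sortIdx S i') t := by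
      apply Finset.sum_subset (Finset.subset_univ T)
      intro t _ htn
      rw [hsupp _ (sortIdx_mem S i) t htn, zero_mul]
    rw [hext]
    have hQe : (∑ t : N, Q (sortIdx S i) t * Q (sortIdx S i') t)
        = (Q * Qᵀ) (sortIdx S i) (sortIdx S i') := by
      rw [Matrix.mul_apply]
      rfl
    rw [hQe, hQ]
    by_cases hii : i = i'
    · subst hii
      simp [Matrix.one_apply]
    · rw [Matrix.one_apply_ne (fun hc => hii (sortIdx_injective S hc)),
        Matrix.one_apply_ne hii]
  have hdet := congrArg Matrix.det key
  rw [Matrix.det_mul, Matrix.det_transpose, Matrix.det_one] at hdet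
  intro h0
  rw [h0, mul_zero] at hdet
  exact zero_ne_one hdet

lemma special_minor (S T : Finset N) (hST : S.card = T.card) :
    ∃ x : PIdx N → ℝ,
      Matrix.det ((Prm x).submatrix (sortIdx S) (sortIdx T ∘ Fin.cast hST)) ≠ 0 := by
  classical
  have hdisj : ∀ i : N, i ∈ T \ S → i ∉ S \ T := fun i h1 h2 =>
    (Finset.mem_sdiff.mp h1).2 (Finset.mem_sdiff.mp h2).1
  have hdisj' : ∀ i : N, i ∈ S \ T → i ∉ T \ S := fun i h1 h2 =>
    (Finset.mem_sdiff.mp h2).2 (Finset.mem_sdiff.mp h1).1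
  have hcard : Fintype.card ↥(T \ S : Finset N) = Fintype.card ↥(S \ T : Finset N) := by
    rw [Fintype.card_coe, Fintype.card_coe]
    exact Finset.card_sdiff_comm hST.symm
  set ψ : ↥(T \ S : Finset N) ≃ ↥(S \ T : Finset N) := Fintype.equivOfCardEq hcard with hψ
  set mt : N → N := fun i =>
    if h : i ∈ T \ S then (ψ ⟨i, h⟩ : N)
    else if h' : i ∈ S \ T then (ψ.symm ⟨i, h'⟩ : N) else i with hmt
  set sg : N → ℝ := fun i => if i ∈ T \ S then 1 else if i ∈ S \ T then -1 else 0 with hsg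
  have hmt1 : ∀ i (h : i ∈ T \ S), mt i = (ψ ⟨i, h⟩ : N) := fun i h => by
    simp only [hmt]; rw [dif_pos h]
  have hmt2 : ∀ i (h : i ∈ S \ T), mt i = (ψ.symm ⟨i, h⟩ : N) := fun i h => by
    simp only [hmt]; rw [dif_neg (hdisj' i h), dif_pos h]
  have hmt3 : ∀ i, i ∉ T \ S → i ∉ S \ T → mt i = i := fun i h1 h2 => by
    simp only [hmt]; rw [dif_neg h1, dif_neg h2]
  have hmtmem1 : ∀ i (h : i ∈ T \ S), mt i ∈ S \ T := fun i h => by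
    rw [hmt1 i h]; exact (ψ ⟨i, h⟩).2
  have hmtmem2 : ∀ i (h : i ∈ S \ T), mt i ∈ T \ S := fun i h => by
    rw [hmt2 i h]; exact (ψ.symm ⟨i, h⟩).2
  have hinvol : ∀ i, mt (mt i) = i := by
    intro i
    by_cases h1 : i ∈ T \ S
    · rw [hmt1 i h1]
      have h2 : (ψ ⟨i, h1⟩ : N) ∈ S \ T := (ψ ⟨i, h1⟩).2
      rw [hmt2 _ h2]
      have he : (⟨(ψ ⟨i, h1⟩ : N), h2⟩ : ↥(S \ T : Finset N)) = ψ ⟨i, h1⟩ :=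
        Subtype.coe_eta _ _
      rw [he, Equiv.symm_apply_apply]
    · by_cases h2 : i ∈ S \ T
      · rw [hmt2 i h2]
        have h3 : (ψ.symm ⟨i, h2⟩ : N) ∈ T \ S := (ψ.symm ⟨i, h2⟩).2
        rw [hmt1 _ h3]
        have he : (⟨(ψ.symm ⟨i, h2⟩ : N), h3⟩ : ↥(T \ S : Finset N)) = ψ.symm ⟨i, h2⟩ :=
          Subtype.coe_eta _ _
        rw [he, Equiv.apply_symm_apply]
      · rw [hmt3 i h1 h2, hmt3 i h1 h2]
  have hsg0 : ∀ i, i ∉ T \ S → i ∉ S \ T → sg i = 0 := fun i h1 h2 => by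
    simp only [hsg]; rw [if_neg h1, if_neg h2]
  have hsg_mt : ∀ i, sg (mt i) = -sg i := by
    intro i
    by_cases h1 : i ∈ T \ S
    · have h2 := hmtmem1 i h1
      simp only [hsg]
      rw [if_neg (hdisj' _ h2), if_pos h2, if_pos h1]
      try norm_num
    · by_cases h2 : i ∈ S \ T
      · have h3 := hmtmem2 i h2
        simp only [hsg]
        rw [if_pos h3, if_neg h1, if_pos h2]
        try norm_num
      · rw [hmt3 i h1 h2, hsg0 i h1 h2]
        norm_num
  have hsgsq : ∀ i, (i ∈ T \ S ∨ i ∈ S \ T) → sg i * sg i = 1 := by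
    intro i hm
    simp only [hsg]
    rcases hm with h | h
    · rw [if_pos h]; try norm_num
    · rw [if_neg (hdisj' i h), if_pos h]; try norm_num
  have hmt_ne : ∀ i, (i ∈ T \ S ∨ i ∈ S \ T) → mt i ≠ i := by
    intro i hm hc
    rcases hm with h | h
    · exact hdisj i h (hc ▸ hmtmem1 i h)
    · exact hdisj' i h (hc ▸ hmtmem2 i h)
  set A0 : Matrix N N ℝ := Matrix.of (fun i j => if j = mt i then sg i else 0) with hA0
  set d : N → ℝ := fun i => if i ∈ T \ S ∨ i ∈ S \ T then 0 else 1 with hd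
  set Dum : Matrix N N ℝ := Matrix.diagonal d with hDum
  have hA0app : ∀ i j, A0 i j = if j = mt i then sg i else 0 := fun i j => rfl
  have F5 : A0ᵀ = -A0 := by
    ext i j
    rw [Matrix.transpose_apply, Matrix.neg_apply, hA0app, hA0app]
    by_cases h : j = mt i
    · have h' : i = mt j := by rw [h, hinvol]
      rw [if_pos h', if_pos h, h, hsg_mt]
    · have h' : ¬ i = mt j := fun hc => h (by rw [hc, hinvol])
      rw [if_neg h', if_neg h]
      norm_num
  have hA0diag : ∀ i, A0 i i = 0 := by
    intro i
    rw [hA0app]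
    by_cases hm : i ∈ T \ S ∨ i ∈ S \ T
    · rw [if_neg (fun hc => hmt_ne i hm hc.symm)]
    · rw [hsg0 i (fun h => hm (Or.inl h)) (fun h => hm (Or.inr h))]
      split_ifs <;> rfl
  have F1 : A0 * A0 = Dum - 1 := by
    ext i j
    rw [Matrix.mul_apply]
    have hterm : ∀ k, A0 i k * A0 k j
        = if k = mt i then sg i * (if j = mt k then sg k else 0) else 0 := by
      intro k
      rw [hA0app, hA0app]
      split_ifs <;> ring
    rw [Finset.sum_congr rfl (fun k _ => hterm k), Finset.sum_ite_eq' Finset.univ (mt i)]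
    rw [if_pos (Finset.mem_univ _), hinvol, hsg_mt]
    rw [Matrix.sub_apply, Matrix.one_apply, hDum]
    by_cases hij : j = i
    · subst hij
      rw [if_pos rfl, Matrix.diagonal_apply_eq, if_pos rfl]
      simp only [hd]
      by_cases hm : j ∈ T \ S ∨ j ∈ S \ T
      · rw [if_pos hm]
        have := hsgsq j hm
        linarith [hsgsq j hm]
      · rw [if_neg hm, hsg0 j (fun h => hm (Or.inl h)) (fun h => hm (Or.inr h))]
        norm_num
    · rw [if_neg hij, Matrix.diagonal_apply_ne d (fun h => hij h.symm), if_neg (fun h : i = j => hij h.symm)]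
      norm_num
  have F2 : Dum * Dum = Dum := by
    have hdd : (fun i => d i * d i) = d := by
      funext i
      simp only [hd]
      split_ifs <;> norm_num
    rw [hDum, Matrix.diagonal_mul_diagonal, hdd]
  have F3 : Dum * A0 = 0 := by
    ext i j
    rw [hDum, Matrix.diagonal_mul, Matrix.zero_apply]
    by_cases hm : i ∈ T \ S ∨ i ∈ S \ T
    · simp only [hd]
      rw [if_pos hm, zero_mul]
    · rw [hA0app, hsg0 i (fun h => hm (Or.inl h)) (fun h => hm (Or.inr h))]
      split_ifs <;> ring
  have F4 : A0 * Dum = 0 := by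
    ext i j
    rw [hDum, Matrix.mul_diagonal, Matrix.zero_apply, hA0app]
    by_cases hj : j = mt i
    · rw [if_pos hj]
      by_cases hm : i ∈ T \ S ∨ i ∈ S \ T
      · have hmm : j ∈ T \ S ∨ j ∈ S \ T := by
          subst hj
          rcases hm with h | h
          · exact Or.inr (hmtmem1 i h)
          · exact Or.inl (hmtmem2 i h)
        simp only [hd]
        rw [if_pos hmm, mul_zero]
      · rw [hsg0 i (fun h => hm (Or.inl h)) (fun h => hm (Or.inr h)), zero_mul]
    · rw [if_neg hj, zero_mul]
  set Q : Matrix N N ℝ := Dum - A0 with hQdef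
  have F6 : Q * (1 + A0) = 1 - A0 := by
    rw [hQdef, sub_mul, mul_add, mul_add, F3, F1, Matrix.mul_one, Matrix.mul_one]
    noncomm_ring
  have hQT : Qᵀ = Dum + A0 := by
    rw [hQdef, Matrix.transpose_sub, hDum, Matrix.diagonal_transpose, F5, sub_neg_eq_add]
  have F7 : Q * Qᵀ = 1 := by
    rw [hQT, hQdef, sub_mul, mul_add, mul_add, F2, F3, F4, F1]
    noncomm_ring
  have F8 : ∀ s ∈ S, ∀ t, t ∉ T → Q s t = 0 := by
    intro s hs t htn
    rw [hQdef, Matrix.sub_apply]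
    by_cases hsT : s ∈ T
    · have h1 : s ∉ T \ S := fun h => (Finset.mem_sdiff.mp h).2 hs
      have h2 : s ∉ S \ T := fun h => (Finset.mem_sdiff.mp h).2 hsT
      have hst : s ≠ t := fun h => htn (h ▸ hsT)
      rw [hDum, Matrix.diagonal_apply_ne d hst, hA0app, hsg0 s h1 h2]
      split_ifs <;> norm_num
    · have h2 : s ∈ S \ T := Finset.mem_sdiff.mpr ⟨hs, hsT⟩
      have hAst : (if t = mt s then sg s else 0) = 0 := by
        rw [if_neg]
        intro hc
        exact htn (hc ▸ (Finset.mem_sdiff.mp (hmtmem2 s h2)).1)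
      rw [hA0app, hAst, hDum]
      have hds : d s = 0 := by
        simp only [hd]
        rw [if_pos (Or.inr h2)]
      by_cases hst : s = t
      · subst hst
        rw [Matrix.diagonal_apply_eq, hds]
        norm_num
      · rw [Matrix.diagonal_apply_ne d hst]
        norm_num
  set x0 : PIdx N → ℝ := fun p => A0 p.1.1 p.1.2 with hx0
  have hArm : Arm x0 = A0 := by
    ext i j
    show (if h : i < j then x0 ⟨(i,j), h⟩ else if h' : j < i then -x0 ⟨(j,i), h'⟩ else 0) = A0 i j
    rcases lt_trichotomy i j with h | h | h
    · rw [dif_pos h]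
    · subst h
      rw [dif_neg (lt_irrefl i), dif_neg (lt_irrefl i), hA0diag]
    · rw [dif_neg (asymm h), dif_pos h]
      have := congrFun (congrFun F5 j) i
      rw [Matrix.transpose_apply, Matrix.neg_apply] at this
      simp only [hx0]
      rw [this]
  have F12 : Matrix.det ((1 : Matrix N N ℝ) + A0) ≠ 0 := by
    have htr : Matrix.det ((1 : Matrix N N ℝ) - A0) = Matrix.det (1 + A0) := by
      rw [← Matrix.det_transpose (1 - A0), Matrix.transpose_sub, Matrix.transpose_one, F5,
        sub_neg_eq_add]
    have hAA : ((1 : Matrix N N ℝ) + A0) * (1 - A0) = 1 - A0 * A0 := by noncomm_ring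
    have hprod : Matrix.det ((1 : Matrix N N ℝ) + A0) * Matrix.det (1 + A0)
        = Matrix.det ((1 : Matrix N N ℝ) - A0 * A0) := by
      rw [show Matrix.det ((1 : Matrix N N ℝ) + A0) * Matrix.det (1 + A0)
          = Matrix.det (1 + A0) * Matrix.det (1 - A0) from by rw [htr],
        ← Matrix.det_mul, hAA]
    have hdiagform : (1 : Matrix N N ℝ) - A0 * A0 = Matrix.diagonal (fun i => 1 - (d i - 1)) := by
      rw [F1, hDum, ← Matrix.diagonal_one, Matrix.diagonal_sub, Matrix.diagonal_sub]
    have hdne : Matrix.det ((1 : Matrix N N ℝ) - A0 * A0) ≠ 0 := by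
      rw [hdiagform, Matrix.det_diagonal]
      rw [Finset.prod_ne_zero_iff]
      intro i _
      simp only [hd]
      split_ifs <;> norm_num
    intro h0
    rw [h0, zero_mul] at hprod
    exact hdne hprod.symm
  have F11 : Prm x0 = Matrix.det ((1 : Matrix N N ℝ) + A0) • Q := by
    unfold Prm
    rw [hArm, ← F6, Matrix.mul_assoc, Matrix.mul_adjugate, Matrix.mul_smul, Matrix.mul_one]
  refine ⟨x0, ?_⟩
  rw [F11]
  rw [show (Matrix.det ((1 : Matrix N N ℝ) + A0) • Q).submatrix (sortIdx S)
      (sortIdx T ∘ Fin.cast hST)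
      = Matrix.det ((1 : Matrix N N ℝ) + A0) • Q.submatrix (sortIdx S)
        (sortIdx T ∘ Fin.cast hST) from rfl]
  rw [Matrix.det_smul]
  exact mul_ne_zero (pow_ne_zero _ F12)
    (submatrix_orth_det_ne_zero S T hST Q F7 F8)
end SpecialAux

section FinalAux
set_option linter.unusedSectionVars false

open Matrix MvPolynomial

variable {N : Type*} [Fintype N] [LinearOrder N]

noncomputable def minorP (S T : Finset N) : MvPolynomial (PIdx N) ℝ :=
  if h : S.card = T.card then
    Matrix.det ((Pmat N).submatrix (sortIdx S) (sortIdx T ∘ Fin.cast h)) else 1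

lemma eval_Pmat_submatrix (x : PIdx N → ℝ) {k : ℕ} (u v : Fin k → N) :
    eval x (Matrix.det ((Pmat N).submatrix u v)) = Matrix.det ((Prm x).submatrix u v) := by
  rw [RingHom.map_det]
  congr 1
  rw [show (eval x).mapMatrix ((Pmat N).submatrix u v)
      = ((Pmat N).submatrix u v).map (eval x) from rfl, ← Matrix.submatrix_map, Pmat_map]

lemma minorP_ne_zero (S T : Finset N) : minorP S T ≠ 0 := by
  unfold minorP
  split_ifs with h
  · obtain ⟨x, hx⟩ := special_minor S T h
    intro h0
    apply hx
    rw [← eval_Pmat_submatrix x (sortIdx S) (sortIdx T ∘ Fin.cast h), h0, map_zero]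
  · exact one_ne_zero

lemma exists_good_point :
    ∃ x : PIdx N → ℝ, Matrix.det (1 + Arm x) ≠ 0 ∧
      ∀ (S T : Finset N) (h : S.card = T.card),
        Matrix.det ((Prm x).submatrix (sortIdx S) (sortIdx T ∘ Fin.cast h)) ≠ 0 := by
  classical
  set bigP : MvPolynomial (PIdx N) ℝ :=
    Matrix.det (1 + Amat N) * ∏ p : Finset N × Finset N, minorP p.1 p.2 with hbigdef
  have hbig : bigP ≠ 0 := by
    apply mul_ne_zero det_one_add_Amat_ne_zero
    rw [Finset.prod_ne_zero_iff]
    exact fun p _ => minorP_ne_zero p.1 p.2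
  have hex : ∃ x, eval x bigP ≠ 0 := by
    by_contra hno
    push_neg at hno
    apply hbig
    exact MvPolynomial.funext (fun x => by rw [hno x, map_zero])
  obtain ⟨x, hx⟩ := hex
  have h1 : eval x (Matrix.det (1 + Amat N)) = Matrix.det (1 + Arm x) := by
    rw [RingHom.map_det]
    congr 1
    rw [map_add, _root_.map_one]
    rw [show (eval x).mapMatrix (Amat N) = Arm x from Amat_map x]
  refine ⟨x, ?_, ?_⟩
  · intro h0
    apply hx
    rw [hbigdef, _root_.map_mul, h1, h0, zero_mul]
  · intro S T h h0
    apply hx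
    rw [hbigdef, _root_.map_mul]
    apply mul_eq_zero_of_right
    rw [map_prod]
    apply Finset.prod_eq_zero (Finset.mem_univ ((S, T) : Finset N × Finset N))
    show eval x (minorP S T) = 0
    unfold minorP
    rw [dif_pos h, eval_Pmat_submatrix]
    exact h0

end FinalAux

section MainProof
open Matrix MvPolynomial

/-- For every orthonormal basis {e_v} of V there is an orthonormal basis {f_v} such
that the pair is generic: ⟨f_S, e_T⟩ ≠ 0 for all S, T ⊆ N of equal size. -/
theorem exists_generic_basis (e : N → N → ℝ) (he : Orthonormalish e)
    (hspan : Submodule.span ℝ (Set.range e) = (⊤ : Submodule ℝ (N → ℝ))) :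
    ∃ f : N → N → ℝ, Orthonormalish f ∧
      ∀ S T : Finset N, S.card = T.card → ip (wedgeFam f S) (wedgeFam e T) ≠ 0 := by
  classical
  obtain ⟨x, hdx, hminor⟩ := exists_good_point (N := N)
  set dx : ℝ := Matrix.det (1 + Arm x) with hdxdef
  set R : Matrix N N ℝ := dx⁻¹ • Prm x with hR
  have hRRT : R * Rᵀ = 1 := by
    rw [hR, Matrix.transpose_smul, Matrix.smul_mul, Matrix.mul_smul, Prm_mul_transpose]
    rw [smul_smul, smul_smul, ← hdxdef]
    rw [show dx⁻¹ * dx⁻¹ * (dx * dx) = 1 from by field_simp]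
    exact one_smul ℝ (1 : Matrix N N ℝ)
  set f : N → N → ℝ := fun v i => ∑ w : N, R v w * e w i with hf
  have hfe : ∀ s t : N, ipV (f s) (e t) = R s t := by
    intro s t
    show (∑ i : N, f s i * e t i) = R s t
    have hterm : ∀ i : N, f s i * e t i = ∑ w : N, R s w * (e w i * e t i) := by
      intro i
      simp only [hf]
      rw [Finset.sum_mul]
      exact Finset.sum_congr rfl fun w _ => by ring
    rw [Finset.sum_congr rfl (fun i _ => hterm i), Finset.sum_comm]
    have hin : ∀ w : N, (∑ i : N, R s w * (e w i * e t i)) = if w = t then R s w else 0 := by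
      intro w
      rw [← Finset.mul_sum]
      have : (∑ i : N, e w i * e t i) = if w = t then 1 else 0 := he w t
      rw [this]
      split_ifs <;> ring
    rw [Finset.sum_congr rfl (fun w _ => hin w), Finset.sum_ite_eq' Finset.univ t (fun w => R s w),
      if_pos (Finset.mem_univ t)]
  have hff : ∀ u v : N, ipV (f u) (f v) = (R * Rᵀ) u v := by
    intro u v
    show (∑ i : N, f u i * f v i) = _
    have hterm : ∀ i : N, f u i * f v i = ∑ w : N, R v w * (f u i * e w i) := by
      intro i
      conv_lhs => rw [show f v i = ∑ w : N, R v w * e w i from rfl]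
      rw [Finset.mul_sum]
      exact Finset.sum_congr rfl fun w _ => by ring
    rw [Finset.sum_congr rfl (fun i _ => hterm i), Finset.sum_comm]
    have hin : ∀ w : N, (∑ i : N, R v w * (f u i * e w i)) = R v w * R u w := by
      intro w
      rw [← Finset.mul_sum]
      congr 1
      exact hfe u w
    rw [Finset.sum_congr rfl (fun w _ => hin w), Matrix.mul_apply]
    exact Finset.sum_congr rfl fun w _ => by rw [Matrix.transpose_apply]; ring
  refine ⟨f, ?_, ?_⟩
  · intro u v
    rw [hff, hRRT, Matrix.one_apply]
  · intro S T hST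
    have hS : wedgeFam f S = wedgeList (List.ofFn fun i : Fin S.card => vec (f (sortIdx S i))) := by
      unfold wedgeFam
      refine congrArg wedgeList ?_
      apply List.ext_getElem
      · simp [Finset.length_sort]
      · intro n h1 h2
        simp only [List.getElem_map, List.getElem_ofFn, sortIdx, List.get_eq_getElem]
        rfl
    have hT : wedgeFam e T
        = wedgeList (List.ofFn fun i : Fin S.card => vec (e (sortIdx T (Fin.cast hST i)))) := by
      unfold wedgeFam
      refine congrArg wedgeList ?_
      apply List.ext_getElem
      · simp [Finset.length_sort, hST]
      · intro n h1 h2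
        simp only [List.getElem_map, List.getElem_ofFn, sortIdx, List.get_eq_getElem]
        rfl
    rw [hS, hT, gram_det]
    have hmat : (Matrix.of fun i j : Fin S.card =>
          ipV (f (sortIdx S i)) (e (sortIdx T (Fin.cast hST j))))
        = R.submatrix (sortIdx S) (sortIdx T ∘ Fin.cast hST) := by
      ext i j
      exact hfe _ _
    rw [hmat, hR]
    rw [show ((dx⁻¹ • Prm x).submatrix (sortIdx S) (sortIdx T ∘ Fin.cast hST))
        = dx⁻¹ • ((Prm x).submatrix (sortIdx S) (sortIdx T ∘ Fin.cast hST)) from rfl]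
    rw [Matrix.det_smul]
    exact mul_ne_zero (pow_ne_zero _ (inv_ne_zero hdx)) (hminor S T hST)

end MainProof
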